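/- For all natural numbers n, d with 1 ≤ d and d ≤ n, the number of edges of the Turán graph SimpleGraph.turanGraph (n+d) d equals the number of edges of SimpleGraph.turanGraph n d plus (d−1)·n + C(d, 2). -/

import Mathlib

open Finset

/-- If `i, j < d` and `n + i ≡ n + j [MOD d]` then `i = j`. -/
lemma turan_aux_inj {d : ℕ} (hd : 0 < d) (n : ℕ) {i j : ℕ} (hi : i < d) (hj : j < d)
    (h : (n + i) % d = (n + j) % d) : i = j := by
  have h2 : i % d = j % d := Nat.ModEq.add_left_cancel' n h
  rwa [Nat.mod_eq_of_lt hi, Nat.mod_eq_of_lt hj] at h2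

/-- Summing `f ((n + j) % d)` over `j < d` is the same as summing `f` over `range d`. -/
lemma turan_shift_sum {d : ℕ} (hd : 0 < d) (n : ℕ) (f : ℕ → ℕ) :
    ∑ j ∈ range d, f ((n + j) % d) = ∑ i ∈ range d, f i := by
  let e : Fin d → Fin d := fun j => ⟨(n + j) % d, Nat.mod_lt _ hd⟩
  have hinj : Function.Injective e := by
    intro i j h
    exact Fin.ext (turan_aux_inj hd n i.2 j.2 (congrArg Fin.val h))
  have hbij : Function.Bijective e := Finite.injective_iff_bijective.mp hinj
  rw [← Fin.sum_univ_eq_sum_range f d,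
      ← Fin.sum_univ_eq_sum_range (fun j => f ((n + j) % d)) d]
  exact hbij.sum_comp (fun i : Fin d => f i)

lemma turan_count_ne {d : ℕ} (hd : 0 < d) {a : ℕ} (ha : a < d) :
    ∑ i ∈ range d, (if a ≠ i then 1 else 0) = d - 1 := by
  rw [← Finset.card_filter, Finset.filter_ne, Finset.card_erase_of_mem (mem_range.mpr ha),
    Finset.card_range]

lemma turan_count_ne' {d : ℕ} (hd : 0 < d) {a : ℕ} (ha : a < d) :
    ∑ i ∈ range d, (if i ≠ a then 1 else 0) = d - 1 := by
  rw [← Finset.card_filter, Finset.filter_ne', Finset.card_erase_of_mem (mem_range.mpr ha),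
    Finset.card_range]

/-- The number of edges of `(V, E)`: the cardinality of the finset of pairs `(u, v)`
with `E u v`. -/
noncomputable def edgeCount {V : Type*} [Fintype V] (E : V → V → Prop) : ℕ :=
  letI := Classical.decPred fun p : V × V => E p.1 p.2
  (Finset.univ.filter fun p : V × V => E p.1 p.2).card

/-- `t(n, r)`: the number of edges of the Turán graph `SimpleGraph.turanGraph n r`. -/
def turanEdges (n r : ℕ) : ℕ :=
  (SimpleGraph.turanGraph n r).edgeFinset.card

lemma turanEdges_two_mul (m d : ℕ) :
    2 * turanEdges m d = ∑ v ∈ range m, ∑ w ∈ range m, (if v % d ≠ w % d then 1 else 0) := by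
  rw [turanEdges, SimpleGraph.two_mul_card_edgeFinset, Finset.card_filter,
    Fintype.sum_prod_type]
  rw [← Fin.sum_univ_eq_sum_range (fun v => ∑ w ∈ range m, if v % d ≠ w % d then 1 else 0) m]
  refine Finset.sum_congr rfl fun v _ => ?_
  rw [← Fin.sum_univ_eq_sum_range (fun w => if (v : ℕ) % d ≠ w % d then 1 else 0) m]
  refine Finset.sum_congr rfl fun w _ => ?_
  simp [SimpleGraph.turanGraph]
  by_cases h : (v : ℕ) % d = (w : ℕ) % d <;> simp [h]

theorem turanEdges_add (n d : ℕ) (hd : 1 ≤ d) (hdn : d ≤ n) :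
    turanEdges (n + d) d = turanEdges n d + (d - 1) * n + Nat.choose d 2 := by
  obtain ⟨e, rfl⟩ : ∃ e, d = e + 1 := ⟨d - 1, by omega⟩
  set d := e + 1 with hdef
  have hd0 : 0 < d := Nat.succ_pos e
  -- the indicator function
  set t : ℕ → ℕ → ℕ := fun v w => if v % d ≠ w % d then 1 else 0 with ht
  have split : ∀ f : ℕ → ℕ, ∑ v ∈ range (n + d), f v
      = ∑ v ∈ range n, f v + ∑ j ∈ range d, f (n + j) := by
    intro f
    exact Finset.sum_range_add f n d
  have hrow : ∀ v, ∑ j ∈ range d, t v (n + j) = d - 1 := by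
    intro v
    exact (turan_shift_sum hd0 n (fun x => if v % d ≠ x then 1 else 0)).trans
      (turan_count_ne hd0 (Nat.mod_lt _ hd0))
  have hcol : ∀ w, ∑ j ∈ range d, t (n + j) w = d - 1 := by
    intro w
    exact (turan_shift_sum hd0 n (fun x => if x ≠ w % d then 1 else 0)).trans
      (turan_count_ne' hd0 (Nat.mod_lt _ hd0))
  have h2m : ∀ m, 2 * turanEdges m d = ∑ v ∈ range m, ∑ w ∈ range m, t v w :=
    fun m => turanEdges_two_mul m d
  have key : 2 * turanEdges (n + d) d
      = 2 * turanEdges n d + n * (d - 1) + (n + d) * (d - 1) := by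
    rw [h2m (n + d), h2m n]
    calc ∑ v ∈ range (n + d), ∑ w ∈ range (n + d), t v w
        = ∑ v ∈ range (n + d), (∑ w ∈ range n, t v w + ∑ j ∈ range d, t v (n + j)) :=
          Finset.sum_congr rfl fun v _ => split (t v)
      _ = ∑ v ∈ range (n + d), ∑ w ∈ range n, t v w
          + ∑ v ∈ range (n + d), ∑ j ∈ range d, t v (n + j) := Finset.sum_add_distrib
      _ = (∑ v ∈ range n, ∑ w ∈ range n, t v w + ∑ i ∈ range d, ∑ w ∈ range n, t (n + i) w)
          + ∑ v ∈ range (n + d), (d - 1) := by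
          rw [split (fun v => ∑ w ∈ range n, t v w)]
          congr 1
          exact Finset.sum_congr rfl fun v _ => hrow v
      _ = (∑ v ∈ range n, ∑ w ∈ range n, t v w + n * (d - 1)) + (n + d) * (d - 1) := by
          rw [Finset.sum_const, Finset.card_range, smul_eq_mul]
          congr 2
          rw [Finset.sum_comm, Finset.sum_congr rfl fun w _ => hcol w, Finset.sum_const,
            Finset.card_range, smul_eq_mul]
  have hsub : d - 1 = e := by omega
  have hch : 2 * Nat.choose d 2 = d * e := by
    have heven : Even (e * (e + 1)) := Nat.even_mul_succ_self e
    rw [Nat.choose_two_right, hsub, Nat.mul_comm d e]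
    exact Nat.mul_div_cancel' heven.two_dvd
  have goal2 : 2 * turanEdges (n + d) d = 2 * (turanEdges n d + (d - 1) * n + Nat.choose d 2) := by
    rw [key, hsub, Nat.mul_add, Nat.mul_add, hch, hdef]
    ring
  exact Nat.eq_of_mul_eq_mul_left (by norm_num) goal2
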